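/- Let α ≥ 3 and κ ≥ ω be cardinals, and let {X_i : i ∈ I} be a set of topological spaces such that S(X_i) ≥ α for each i ∈ I. Let μ := min{κ, |I|⁺}. Then S((X_I)_κ) > β^{<μ} for each cardinal β < α. -/

import Mathlib

open Cardinal TopologicalSpace Set

universe u

/-- The `κ`-box topology on a product of topological spaces: generated by the boxes
`Π i, U i` with each `U i` open and fewer than `κ` coordinates restricted. -/
def boxTopology (κ : Cardinal.{u}) {ι : Type u} (X : ι → Type u)
    [∀ i, TopologicalSpace (X i)] : TopologicalSpace (∀ i, X i) :=
  TopologicalSpace.generateFrom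
    {S | ∃ U : ∀ i, Set (X i), (∀ i, IsOpen (U i)) ∧
      #{i | U i ≠ Set.univ} < κ ∧ S = Set.pi Set.univ U}

/-- A cellular family: a family of pairwise disjoint nonempty open sets. -/
def IsCellular {X : Type u} [TopologicalSpace X] (C : Set (Set X)) : Prop :=
  (∀ U ∈ C, IsOpen U ∧ U.Nonempty) ∧ C.Pairwise fun U V => Disjoint U V

/-- The Souslin number: the least cardinal `c` such that no cellular family has
cardinality `c` (finite values allowed). -/
noncomputable def souslin (X : Type u) [TopologicalSpace X] : Cardinal.{u} :=
  sInf {c | ¬∃ C : Set (Set X), IsCellular C ∧ #C = c}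

/-- A subfamily of a cellular family is cellular; hence every cardinal below the
cardinality of a cellular family is realized by a cellular family. -/
lemma exists_cellular_of_le {X : Type u} [TopologicalSpace X] {C : Set (Set X)}
    (h : IsCellular C) {c : Cardinal.{u}} (hc : c ≤ #C) :
    ∃ D : Set (Set X), IsCellular D ∧ #D = c := by
  obtain ⟨D, hDC, hD⟩ := Cardinal.le_mk_iff_exists_subset.mp hc
  exact ⟨D, ⟨fun U hU => h.1 U (hDC hU), h.2.mono hDC⟩, hD⟩

/-- If every cardinal `≤ t` is realized as the cardinality of a cellular family,
then `t < souslin X`. -/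
lemma lt_souslin' {X : Type u} [TopologicalSpace X] {t : Cardinal.{u}}
    (h : ∀ c ≤ t, ∃ C : Set (Set X), IsCellular C ∧ #C = c) : t < souslin X := by
  have hne : {c | ¬∃ C : Set (Set X), IsCellular C ∧ #C = c}.Nonempty := by
    refine ⟨Order.succ (2 ^ #X), ?_⟩
    rintro ⟨C, -, hC⟩
    have h1 : #C ≤ 2 ^ #X := le_of_le_of_eq (Cardinal.mk_set_le C) Cardinal.mk_set
    rw [hC] at h1
    exact absurd h1 (not_le.mpr (Order.lt_succ _))
  by_contra hle
  push_neg at hle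
  exact csInf_mem hne (h _ hle)

/-- Boxes determined by pairwise incompatible partial assignments of cells form a
cellular family in the `κ`-box topology. -/
lemma exists_cellular_boxes (κ : Cardinal.{u}) {ι : Type u} (X : ι → Type u)
    [∀ i, TopologicalSpace (X i)] [∀ i, Nonempty (X i)]
    {Bout : Type u} (u : ∀ i, Bout → Set (X i))
    (hopen : ∀ i b, IsOpen (u i b)) (hne : ∀ i b, (u i b).Nonempty)
    (hdisj : ∀ i (b b' : Bout), b ≠ b' → Disjoint (u i b) (u i b'))
    {Ω : Type u} (A : Ω → ι → Option Bout)
    (hsmall : ∀ ω, #{i | A ω i ≠ none} < κ)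
    (hincomp : ∀ ω ω', ω ≠ ω' → ∃ i b b', A ω i = some b ∧ A ω' i = some b' ∧ b ≠ b') :
    ∃ C : Set (Set (∀ i, X i)), @IsCellular _ (boxTopology κ X) C ∧ #C = #Ω := by
  classical
  set U : Ω → ∀ i, Set (X i) := fun ω i => (A ω i).elim Set.univ (u i) with hUdef
  have hUsome : ∀ ω i b, A ω i = some b → U ω i = u i b := by
    intro ω i b h
    simp only [hUdef]
    rw [h]
    rfl
  have hUnone : ∀ ω i, A ω i = none → U ω i = Set.univ := by
    intro ω i h
    simp only [hUdef]
    rw [h]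
    rfl
  have hUopen : ∀ ω i, IsOpen (U ω i) := by
    intro ω i
    rcases h : A ω i with _ | b
    · rw [hUnone ω i h]; exact isOpen_univ
    · rw [hUsome ω i b h]; exact hopen i b
  have hUne : ∀ ω i, (U ω i).Nonempty := by
    intro ω i
    rcases h : A ω i with _ | b
    · rw [hUnone ω i h]; exact Set.univ_nonempty
    · rw [hUsome ω i b h]; exact hne i b
  have hBopen : ∀ ω, @IsOpen _ (boxTopology κ X) (Set.pi Set.univ (U ω)) := by
    intro ω
    refine TopologicalSpace.GenerateOpen.basic _ ⟨U ω, hUopen ω, ?_, rfl⟩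
    refine lt_of_le_of_lt (Cardinal.mk_le_mk_of_subset ?_) (hsmall ω)
    intro i hi
    simp only [Set.mem_setOf_eq] at hi ⊢
    intro hA
    exact hi (hUnone ω i hA)
  have hBne : ∀ ω, (Set.pi Set.univ (U ω)).Nonempty := fun ω =>
    ⟨fun i => (hUne ω i).some, fun i _ => (hUne ω i).some_mem⟩
  have hBdisj : ∀ ω ω', ω ≠ ω' → Disjoint (Set.pi Set.univ (U ω)) (Set.pi Set.univ (U ω')) := by
    intro ω ω' hωω'
    obtain ⟨i, b, b', hb, hb', hbb'⟩ := hincomp ω ω' hωω'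
    rw [Set.disjoint_left]
    intro x hx hx'
    have h1 : x i ∈ u i b := by rw [← hUsome ω i b hb]; exact hx i (Set.mem_univ i)
    have h2 : x i ∈ u i b' := by rw [← hUsome ω' i b' hb']; exact hx' i (Set.mem_univ i)
    exact Set.disjoint_left.mp (hdisj i b b' hbb') h1 h2
  have hBinj : Function.Injective fun ω => Set.pi Set.univ (U ω) := by
    intro ω ω' h
    by_contra hne'
    have h' : Set.pi Set.univ (U ω) = Set.pi Set.univ (U ω') := h
    have hd := hBdisj ω ω' hne'
    rw [h'] at hd
    exact (hBne ω').ne_empty (disjoint_self.mp hd)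
  refine ⟨Set.range fun ω => Set.pi Set.univ (U ω), ⟨?_, ?_⟩, Cardinal.mk_range_eq _ hBinj⟩
  · rintro V ⟨ω, rfl⟩
    exact ⟨hBopen ω, hBne ω⟩
  · rintro V ⟨ω, rfl⟩ V' ⟨ω', rfl⟩ hVV'
    exact hBdisj ω ω' fun h => hVV' (by rw [h])

/-- The tagged partial assignment used to build a large incompatible family. -/
def tagFun {Bout : Type u} (b₀ b₁ : Bout) {W : Type u} [LinearOrder W]
    (ω : Σ w : W, ({w' : W // w' < w} → Bout)) : W ⊕ W → Option Bout
  | Sum.inl w' => if w' < ω.1 then some b₀ else if w' = ω.1 then some b₁ else none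
  | Sum.inr w' => if h : w' < ω.1 then some (ω.2 ⟨w', h⟩) else none

/-- There is a pairwise incompatible family of small partial assignments, indexed by a
type of cardinality at least `#Bout ^< κ`, on an index set of cardinality at most `κ`. -/
lemma exists_incompatible (κ : Cardinal.{u}) (hκ : ℵ₀ ≤ κ) (Bout : Type u)
    (b₀ b₁ : Bout) (hb01 : b₀ ≠ b₁) :
    ∃ (T : Type u) (Ω : Type u) (a : Ω → T → Option Bout),
      #T ≤ κ ∧ (∀ ω, #{p | a ω p ≠ none} < κ) ∧
      (∀ ω ω', ω ≠ ω' → ∃ p b b', a ω p = some b ∧ a ω' p = some b' ∧ b ≠ b') ∧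
      #Bout ^< κ ≤ #Ω := by
  classical
  haveI : IsWellOrder κ.ord.ToType (· < ·) := isWellOrder_lt (α := κ.ord.ToType)
  have hpred : ∀ w : κ.ord.ToType, #{w' // w' < w} < κ := by
    intro w
    have h1 : Ordinal.typein (· < ·) w < κ.ord := by
      simpa using Ordinal.typein_lt_type (· < ·) w
    have h2 := Ordinal.card_typein (r := ((· < ·) : κ.ord.ToType → κ.ord.ToType → Prop)) w
    rw [← h2]
    exact Cardinal.lt_ord.mp h1
  refine ⟨κ.ord.ToType ⊕ κ.ord.ToType, Σ w : κ.ord.ToType, ({w' // w' < w} → Bout),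
    tagFun b₀ b₁, ?_, ?_, ?_, ?_⟩
  · have : #(κ.ord.ToType ⊕ κ.ord.ToType) = κ := by
      simp [Cardinal.mk_sum, Cardinal.mk_toType, Cardinal.card_ord, Cardinal.add_eq_self hκ]
    exact this.le
  · intro ω
    have hsub : {p | tagFun b₀ b₁ ω p ≠ none} ⊆
        Sum.inl '' Set.Iic ω.1 ∪ Sum.inr '' Set.Iio ω.1 := by
      rintro (w' | w') hp
      · left
        refine ⟨w', ?_, rfl⟩
        rw [Set.mem_setOf_eq] at hp
        by_contra h
        apply hp
        have h1 : ¬ w' < ω.1 := fun hlt => h hlt.le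
        have h2 : ¬ w' = ω.1 := fun he => h he.le
        simp [tagFun, h1, h2]
      · right
        refine ⟨w', ?_, rfl⟩
        rw [Set.mem_setOf_eq] at hp
        by_contra h
        simp only [Set.mem_Iio] at h
        apply hp
        simp [tagFun, h]
    have hIio : #(Set.Iio ω.1 : Set κ.ord.ToType) < κ := hpred ω.1
    have hIic : #(Set.Iic ω.1 : Set κ.ord.ToType) < κ := by
      rw [← Set.Iio_insert]
      exact lt_of_le_of_lt Cardinal.mk_insert_le
        (Cardinal.add_lt_of_lt hκ hIio (lt_of_lt_of_le Cardinal.one_lt_aleph0 hκ))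
    calc #{p | tagFun b₀ b₁ ω p ≠ none}
        ≤ #(Sum.inl '' Set.Iic ω.1 ∪ Sum.inr '' Set.Iio ω.1 :
            Set (κ.ord.ToType ⊕ κ.ord.ToType)) := Cardinal.mk_le_mk_of_subset hsub
      _ ≤ #(Sum.inl '' Set.Iic ω.1 : Set (κ.ord.ToType ⊕ κ.ord.ToType)) +
          #(Sum.inr '' Set.Iio ω.1 : Set (κ.ord.ToType ⊕ κ.ord.ToType)) :=
            Cardinal.mk_union_le _ _
      _ ≤ #(Set.Iic ω.1 : Set κ.ord.ToType) + #(Set.Iio ω.1 : Set κ.ord.ToType) :=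
            add_le_add Cardinal.mk_image_le Cardinal.mk_image_le
      _ < κ := Cardinal.add_lt_of_lt hκ hIic hIio
  · rintro ⟨w, f⟩ ⟨w', f'⟩ hne
    rcases lt_trichotomy w w' with h | h | h
    · refine ⟨Sum.inl w, b₁, b₀, ?_, ?_, hb01.symm⟩
      · simp [tagFun]
      · simp [tagFun, h]
    · subst h
      have hff' : f ≠ f' := fun hh => hne (by rw [hh])
      obtain ⟨x, hx⟩ := Function.ne_iff.mp hff'
      refine ⟨Sum.inr x.1, f x, f' x, ?_, ?_, hx⟩
      · simp [tagFun, x.2]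
      · simp [tagFun, x.2]
    · refine ⟨Sum.inl w', b₀, b₁, ?_, ?_, hb01⟩
      · simp [tagFun, h]
      · simp [tagFun]
  · rw [Cardinal.powerlt_le]
    intro c hc
    have h1 : c.ord < Ordinal.type ((· < ·) : κ.ord.ToType → κ.ord.ToType → Prop) := by
      rw [Ordinal.type_toType]
      exact Cardinal.ord_lt_ord.mpr hc
    have hcard : #{w' // w' < Ordinal.enum (· < ·) ⟨c.ord, h1⟩} = c := by
      refine (Ordinal.card_typein
        (r := ((· < ·) : κ.ord.ToType → κ.ord.ToType → Prop)) _).symm.trans ?_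
      simp only [Ordinal.typein_enum, Cardinal.card_ord]
    calc #Bout ^ c
        = #({w' // w' < Ordinal.enum (· < ·) ⟨c.ord, h1⟩} → Bout) := by
          conv_lhs => rw [← hcard]
          exact Cardinal.power_def _ _
      _ ≤ #(Σ w : κ.ord.ToType, ({w' // w' < w} → Bout)) :=
          Cardinal.mk_le_of_injective (show Function.Injective
            (Sigma.mk (β := fun w : κ.ord.ToType => ({w' // w' < w} → Bout))
              (Ordinal.enum (· < ·) ⟨c.ord, h1⟩)) from sigma_mk_injective)

theorem stmt13 (α κ : Cardinal.{u}) (hα : 3 ≤ α) (hκ : ℵ₀ ≤ κ)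
    {ι : Type u} (X : ι → Type u) [∀ i, TopologicalSpace (X i)]
    (hS : ∀ i, α ≤ souslin (X i)) :
    ∀ β < α, β ^< min κ (Order.succ #ι) < @souslin (∀ i, X i) (boxTopology κ X) := by
  classical
  intro β hβ
  have hcell : ∀ c < α, ∀ i, ∃ C : Set (Set (X i)), IsCellular C ∧ #C = c := by
    intro c hc i
    by_contra h
    have hmem : c ∈ {c' | ¬∃ C : Set (Set (X i)), IsCellular C ∧ #C = c'} := h
    have hle : souslin (X i) ≤ c := csInf_le' hmem
    exact absurd hle (not_le.mpr (lt_of_lt_of_le hc (hS i)))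
  haveI hXne : ∀ i, Nonempty (X i) := by
    intro i
    have h13 : (1 : Cardinal.{u}) < α :=
      lt_of_lt_of_le (by exact_mod_cast (by norm_num : (1:ℕ) < 3)) hα
    obtain ⟨C, hC, hC1⟩ := hcell 1 h13 i
    have hCne : C.Nonempty := by
      rw [← Set.nonempty_coe_sort, ← Cardinal.mk_ne_zero_iff, hC1]
      exact one_ne_zero
    obtain ⟨V, hV⟩ := hCne
    obtain ⟨x, -⟩ := (hC.1 V hV).2
    exact ⟨x⟩
  rcases le_or_gt β 1 with hβ1 | hβ1
  · -- small `β`: the powerlt is at most `1`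
    have hle1 : β ^< min κ (Order.succ #ι) ≤ 1 := by
      rw [Cardinal.powerlt_le]
      intro x _
      calc β ^ x ≤ 1 ^ x := Cardinal.power_le_power_right hβ1
        _ = 1 := Cardinal.one_power
    have hC : @IsCellular _ (boxTopology κ X) {Set.univ} := by
      constructor
      · intro V hV
        rw [Set.mem_singleton_iff] at hV
        subst hV
        exact ⟨@isOpen_univ _ (boxTopology κ X), Set.univ_nonempty⟩
      · exact Set.pairwise_singleton _ _
    refine lt_of_le_of_lt hle1 (@lt_souslin' _ (boxTopology κ X) _ ?_)
    intro c hc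
    refine @exists_cellular_of_le _ (boxTopology κ X) _ hC _ ?_
    rwa [Cardinal.mk_singleton]
  · -- main case: `2 ≤ β`
    have hβ0 : β ≠ 0 := (zero_lt_one.trans hβ1).ne'
    haveI : Nontrivial β.out := Cardinal.one_lt_iff_nontrivial.mp (by rwa [Cardinal.mk_out])
    obtain ⟨b₀, b₁, hb01⟩ := exists_pair_ne β.out
    have hcells : ∀ i, ∃ u : β.out → Set (X i),
        (∀ b, IsOpen (u b)) ∧ (∀ b, (u b).Nonempty) ∧
          ∀ b b', b ≠ b' → Disjoint (u b) (u b') := by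
      intro i
      obtain ⟨C, hC, hCc⟩ := hcell β hβ i
      obtain ⟨e⟩ := Cardinal.eq.mp ((Cardinal.mk_out β).trans hCc.symm)
      refine ⟨fun b => (e b : Set (X i)), fun b => (hC.1 _ (e b).2).1,
        fun b => (hC.1 _ (e b).2).2, fun b b' hbb' => ?_⟩
      exact hC.2 (e b).2 (e b').2 fun h => hbb' (e.injective (Subtype.ext h))
    choose u huo hun hud using hcells
    rcases le_or_gt (Order.succ #ι) κ with hcase | hcase
    · -- few coordinates: use total functions `ι → β.out`
      have hι : #ι < κ := Order.succ_le_iff.mp hcase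
      have hsmall : ∀ f : ι → β.out, #{i | (some (f i) : Option β.out) ≠ none} < κ :=
        fun f => lt_of_le_of_lt (Cardinal.mk_set_le _) hι
      have hincomp : ∀ f g : ι → β.out, f ≠ g → ∃ i b b',
          (some (f i) : Option β.out) = some b ∧ (some (g i) : Option β.out) = some b' ∧
            b ≠ b' := by
        intro f g hfg
        obtain ⟨i, hi⟩ := Function.ne_iff.mp hfg
        exact ⟨i, f i, g i, rfl, rfl, hi⟩
      obtain ⟨C, hC, hCcard⟩ := exists_cellular_boxes κ X u huo hun hud
        (fun (f : ι → β.out) i => some (f i)) hsmall hincomp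
      have heq : β ^< min κ (Order.succ #ι) = #(ι → β.out) := by
        rw [min_eq_right hcase, Cardinal.powerlt_succ hβ0]
        have hpd := Cardinal.power_def β.out ι
        rw [Cardinal.mk_out] at hpd
        exact hpd
      refine @lt_souslin' _ (boxTopology κ X) _ ?_
      intro c hc
      refine @exists_cellular_of_le _ (boxTopology κ X) _ hC _ ?_
      rw [hCcard, ← heq]
      exact hc
    · -- many coordinates: use the incompatible tagged family
      have hκι : κ ≤ #ι := Order.lt_succ_iff.mp hcase
      have hμ : min κ (Order.succ #ι) = κ := min_eq_left hcase.le
      obtain ⟨T, Ω, a, hT, hasmall, haincomp, hacard⟩ :=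
        exists_incompatible κ hκ β.out b₀ b₁ hb01
      rw [Cardinal.mk_out] at hacard
      obtain ⟨j⟩ := Cardinal.le_def _ _ |>.mp (hT.trans hκι)
      set A : Ω → ι → Option β.out :=
        fun ω i => if h : ∃ p, j p = i then a ω h.choose else none with hA
      have hkey : ∀ ψ p, A ψ (j p) = a ψ p := by
        intro ψ p
        have hex : ∃ q, j q = j p := ⟨p, rfl⟩
        simp only [hA, dif_pos hex]
        congr 1
        exact j.injective hex.choose_spec
      have hsmall : ∀ ω, #{i | A ω i ≠ none} < κ := by
        intro ω
        have hsub : {i | A ω i ≠ none} ⊆ (fun p => j p) '' {p | a ω p ≠ none} := by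
          intro i hi
          simp only [Set.mem_setOf_eq, hA] at hi
          by_cases h : ∃ p, j p = i
          · rw [dif_pos h] at hi
            exact ⟨h.choose, hi, h.choose_spec⟩
          · exact absurd (dif_neg h) hi
        exact lt_of_le_of_lt
          ((Cardinal.mk_le_mk_of_subset hsub).trans Cardinal.mk_image_le) (hasmall ω)
      have hincomp : ∀ ω ω', ω ≠ ω' →
          ∃ i b b', A ω i = some b ∧ A ω' i = some b' ∧ b ≠ b' := by
        intro ω ω' hωω'
        obtain ⟨p, b, b', h1, h2, h3⟩ := haincomp ω ω' hωω'
        exact ⟨j p, b, b', (hkey ω p).trans h1, (hkey ω' p).trans h2, h3⟩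
      obtain ⟨C, hC, hCcard⟩ := exists_cellular_boxes κ X u huo hun hud A hsmall hincomp
      refine @lt_souslin' _ (boxTopology κ X) _ ?_
      intro c hc
      refine @exists_cellular_of_le _ (boxTopology κ X) _ hC _ ?_
      rw [hCcard]
      rw [hμ] at hc
      exact hc.trans hacard
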